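/- Let T ≥ 1 be an integer, let τ₀ ∈ {0, 1, …, T−1}, let δ be a real number with |δ| ≤ 1/2, and let a : {0, 1, …, T−1} → [0, 1] be such that a_τ ≤ (4/π²)·(τ₀ − τ + δ)^{−4} for every τ with |τ − τ₀| ≥ 2. Then ∑_{τ=0}^{T−1} a_τ·(τ₀ − τ + δ)² ≤ 11/4 + 16/π². -/

import Mathlib

open scoped Real

/-- One tail step: if `aτ ≤ C/(k+δ)⁴` with `k ≥ 2`, `|δ| ≤ 1/2`, then
`aτ·(k+δ)² ≤ C·(1/(k-1) - 1/k)`. -/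
lemma stmt_8_tail_step (C k δ aτ : ℝ) (hC : 0 < C) (hk : 2 ≤ k) (hδ : |δ| ≤ 1 / 2)
    (ha0 : 0 ≤ aτ) (ha : aτ ≤ C / (k + δ) ^ 4) :
    aτ * (k + δ) ^ 2 ≤ C * (1 / (k - 1) - 1 / k) := by
  obtain ⟨hδ1, hδ2⟩ := abs_le.mp hδ
  have hx : (3 : ℝ) / 2 ≤ k + δ := by linarith
  have hxpos : (0 : ℝ) < (k + δ) ^ 2 := by nlinarith
  have hkk : (0 : ℝ) < (k - 1) * k := by nlinarith
  have hk0 : k ≠ 0 := by positivity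
  have hk1 : k - 1 ≠ 0 := by
    intro h; rw [sub_eq_zero] at h; linarith [h]
  have hx2 : (k - 1) * k ≤ (k + δ) ^ 2 := by nlinarith [sq_nonneg δ]
  have h1 : aτ * (k + δ) ^ 2 ≤ (C / (k + δ) ^ 4) * (k + δ) ^ 2 :=
    mul_le_mul_of_nonneg_right ha hxpos.le
  have h2 : (C / (k + δ) ^ 4) * (k + δ) ^ 2 = C / (k + δ) ^ 2 := by
    field_simp
  have h3 : C / (k + δ) ^ 2 ≤ C / ((k - 1) * k) :=
    div_le_div_of_nonneg_left hC.le hkk hx2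
  have h4 : C / ((k - 1) * k) = C * (1 / (k - 1) - 1 / k) := by
    field_simp
    ring
  rw [← h4]
  calc aτ * (k + δ) ^ 2 ≤ C / (k + δ) ^ 2 := h2 ▸ h1
    _ ≤ C / ((k - 1) * k) := h3

/-- Second moment of the QPE mismatch in the HHL analysis: if `0 ≤ a τ ≤ 1`
for all `τ < T` and `a τ ≤ (4/π²)·(τ₀ − τ + δ)⁻⁴` whenever `|τ − τ₀| ≥ 2`, then
`∑_{τ=0}^{T−1} a τ·(τ₀ − τ + δ)² ≤ 11/4 + 16/π²`. -/
theorem stmt_8 (T : ℕ) (hT : 1 ≤ T) (τ₀ : ℕ) (hτ₀ : τ₀ < T)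
    (δ : ℝ) (hδ : |δ| ≤ 1 / 2) (a : ℕ → ℝ)
    (ha : ∀ τ < T, a τ ∈ Set.Icc (0 : ℝ) 1)
    (ha' : ∀ τ < T, 2 ≤ |(τ : ℝ) - (τ₀ : ℝ)| →
      a τ ≤ (4 / π ^ 2) / ((τ₀ : ℝ) - (τ : ℝ) + δ) ^ 4) :
    ∑ τ ∈ Finset.range T, a τ * ((τ₀ : ℝ) - (τ : ℝ) + δ) ^ 2 ≤ 11 / 4 + 16 / π ^ 2 := by
  have hπ : (0 : ℝ) < π ^ 2 := by positivity
  set C : ℝ := 4 / π ^ 2 with hCdef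
  have hC0 : 0 < C := by rw [hCdef]; positivity
  obtain ⟨hδ1, hδ2⟩ := abs_le.mp hδ
  set f : ℕ → ℝ := fun τ => a τ * ((τ₀ : ℝ) - (τ : ℝ) + δ) ^ 2 with hfdef
  set L : ℕ := τ₀ - 1 with hLdef
  set R : ℕ := min T (τ₀ + 2) with hRdef
  have hLT : L ≤ T := le_trans (Nat.sub_le _ _) hτ₀.le
  have hLR : L ≤ R := le_min hLT (by omega)
  have hRT : R ≤ T := min_le_left _ _
  have hsplit : ∑ τ ∈ Finset.range T, f τ
      = ∑ τ ∈ Finset.range L, f τ + ∑ τ ∈ Finset.Ico L R, f τ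
        + ∑ τ ∈ Finset.Ico R T, f τ := by
    rw [Finset.range_eq_Ico,
      ← Finset.sum_Ico_consecutive f (Nat.zero_le L) hLT,
      ← Finset.sum_Ico_consecutive f hLR hRT]
    rw [Finset.range_eq_Ico]
    ring
  -- Left tail
  have hA : ∑ τ ∈ Finset.range L, f τ ≤ C := by
    rcases Nat.eq_zero_or_pos τ₀ with h0 | hτ₀1
    · have : L = 0 := by omega
      rw [this]
      simpa using hC0.le
    · set g : ℕ → ℝ := fun n => 1 / ((τ₀ : ℝ) - (n : ℝ)) with hgdef
      have key : ∀ τ ∈ Finset.range L, f τ ≤ C * (g (τ + 1) - g τ) := by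
        intro τ hτ
        simp only [Finset.mem_range] at hτ
        have hτ2 : τ + 2 ≤ τ₀ := by omega
        have hτT : τ < T := by omega
        have hk2 : (2 : ℝ) ≤ (τ₀ : ℝ) - (τ : ℝ) := by
          have : ((τ : ℕ) : ℝ) + 2 ≤ (τ₀ : ℝ) := by exact_mod_cast hτ2
          linarith
        have habs : 2 ≤ |(τ : ℝ) - (τ₀ : ℝ)| := by
          rw [abs_sub_comm, abs_of_nonneg (by linarith)]
          linarith
        have haτ := ha' τ hτT habs
        have ha0 := (ha τ hτT).1
        have hstep := stmt_8_tail_step C ((τ₀ : ℝ) - (τ : ℝ)) δ (a τ) hC0 hk2 hδ ha0 haτ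
        have e : g (τ + 1) - g τ
            = 1 / (((τ₀ : ℝ) - (τ : ℝ)) - 1) - 1 / ((τ₀ : ℝ) - (τ : ℝ)) := by
          simp only [hgdef]
          push_cast
          rw [sub_add_eq_sub_sub]
        simp only [hfdef]
        rw [e]
        exact hstep
      calc ∑ τ ∈ Finset.range L, f τ
          ≤ ∑ τ ∈ Finset.range L, C * (g (τ + 1) - g τ) := Finset.sum_le_sum key
        _ = C * (g L - g 0) := by rw [← Finset.mul_sum, Finset.sum_range_sub g]
        _ ≤ C := by
            simp only [hgdef, hLdef, Nat.cast_sub hτ₀1, Nat.cast_zero, Nat.cast_one, sub_zero]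
            rw [show (τ₀ : ℝ) - ((τ₀ : ℝ) - 1) = 1 by ring]
            have hτ₀pos : (0 : ℝ) < (τ₀ : ℝ) := by exact_mod_cast hτ₀1
            have hp : (0 : ℝ) ≤ C * (1 / (τ₀ : ℝ)) :=
              mul_nonneg hC0.le (by positivity)
            nlinarith [hp]
  -- Right tail
  have hB : ∑ τ ∈ Finset.Ico R T, f τ ≤ C := by
    rcases le_or_gt T (τ₀ + 2) with hTl | hTl
    · have : R = T := by omega
      rw [this]
      simpa using hC0.le
    · have hRval : R = τ₀ + 2 := by omega
      rw [hRval, Finset.sum_Ico_eq_sum_range]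
      set n : ℕ := T - (τ₀ + 2) with hn
      set g : ℕ → ℝ := fun m => -(1 / ((m : ℝ) + 1)) with hgdef
      have key : ∀ i ∈ Finset.range n, f (τ₀ + 2 + i) ≤ C * (g (i + 1) - g i) := by
        intro i hi
        simp only [Finset.mem_range] at hi
        have hτT : τ₀ + 2 + i < T := by omega
        have hk2 : (2 : ℝ) ≤ (i : ℝ) + 2 := by
          have : (0 : ℝ) ≤ (i : ℝ) := Nat.cast_nonneg i
          linarith
        have habs : 2 ≤ |((τ₀ + 2 + i : ℕ) : ℝ) - (τ₀ : ℝ)| := by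
          push_cast
          rw [abs_of_nonneg (by linarith)]
          linarith
        have haτ := ha' (τ₀ + 2 + i) hτT habs
        have ha0 := (ha (τ₀ + 2 + i) hτT).1
        have hδ' : |(-δ)| ≤ 1 / 2 := by rwa [abs_neg]
        have hrw : ((τ₀ : ℝ) - ((τ₀ + 2 + i : ℕ) : ℝ) + δ) ^ 4
            = (((i : ℝ) + 2) + (-δ)) ^ 4 := by push_cast; ring
        have hrw2 : ((τ₀ : ℝ) - ((τ₀ + 2 + i : ℕ) : ℝ) + δ) ^ 2
            = (((i : ℝ) + 2) + (-δ)) ^ 2 := by push_cast; ring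
        rw [hrw] at haτ
        have hstep := stmt_8_tail_step C ((i : ℝ) + 2) (-δ) (a (τ₀ + 2 + i)) hC0 hk2 hδ' ha0 haτ
        have e : g (i + 1) - g i
            = 1 / ((((i : ℝ) + 2)) - 1) - 1 / ((i : ℝ) + 2) := by
          simp only [hgdef]
          push_cast
          ring_nf
        simp only [hfdef]
        rw [hrw2, e]
        exact hstep
      calc ∑ i ∈ Finset.range n, f (τ₀ + 2 + i)
          ≤ ∑ i ∈ Finset.range n, C * (g (i + 1) - g i) := Finset.sum_le_sum key
        _ = C * (g n - g 0) := by rw [← Finset.mul_sum, Finset.sum_range_sub g]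
        _ ≤ C := by
            simp only [hgdef, Nat.cast_zero]
            have hp : (0 : ℝ) ≤ C * (1 / ((n : ℝ) + 1)) :=
              mul_nonneg hC0.le (by positivity)
            nlinarith [hp]
  -- Central part
  have hM : ∑ τ ∈ Finset.Ico L R, f τ ≤ 11 / 4 := by
    have step1 : ∑ τ ∈ Finset.Ico L R, f τ
        ≤ ∑ τ ∈ Finset.Ico L R, ((τ₀ : ℝ) - (τ : ℝ) + δ) ^ 2 := by
      apply Finset.sum_le_sum
      intro τ hτ
      simp only [Finset.mem_Ico] at hτ
      have hτT : τ < T := lt_of_lt_of_le hτ.2 hRT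
      obtain ⟨h0, h1⟩ := ha τ hτT
      have := sq_nonneg ((τ₀ : ℝ) - (τ : ℝ) + δ)
      simp only [hfdef]
      nlinarith
    have step2 : ∑ τ ∈ Finset.Ico L R, ((τ₀ : ℝ) - (τ : ℝ) + δ) ^ 2
        ≤ ∑ τ ∈ Finset.Ico L (τ₀ + 2), ((τ₀ : ℝ) - (τ : ℝ) + δ) ^ 2 := by
      apply Finset.sum_le_sum_of_subset_of_nonneg
      · exact Finset.Ico_subset_Ico le_rfl (min_le_right _ _)
      · intro τ _ _
        positivity
    have hsq : (0 : ℝ) ≤ (1 / 2 - δ) * (1 / 2 + δ) :=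
      mul_nonneg (by linarith) (by linarith)
    have step3 : ∑ τ ∈ Finset.Ico L (τ₀ + 2), ((τ₀ : ℝ) - (τ : ℝ) + δ) ^ 2 ≤ 11 / 4 := by
      rcases Nat.eq_zero_or_pos τ₀ with h0 | hτ₀1
      · have hL0 : L = 0 := by omega
        rw [hL0, h0]
        rw [Finset.sum_Ico_eq_sum_range]
        norm_num [Finset.sum_range_succ]
        nlinarith [hsq]
      · rw [hLdef, Finset.sum_Ico_eq_sum_range]
        have hcard : τ₀ + 2 - (τ₀ - 1) = 3 := by omega
        rw [hcard]
        rw [Finset.sum_range_succ, Finset.sum_range_succ, Finset.sum_range_succ,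
          Finset.sum_range_zero]
        have hc : ((τ₀ - 1 : ℕ) : ℝ) = (τ₀ : ℝ) - 1 := by
          rw [Nat.cast_sub hτ₀1]; norm_num
        push_cast [hc]
        nlinarith [hsq]
    linarith
  have hfinal : C + 11 / 4 + C ≤ 11 / 4 + 16 / π ^ 2 := by
    have h8 : (0 : ℝ) ≤ 8 / π ^ 2 := by positivity
    have he : 16 / π ^ 2 - (C + C) = 8 / π ^ 2 := by
      rw [hCdef]; ring
    linarith
  calc ∑ τ ∈ Finset.range T, f τ
      = ∑ τ ∈ Finset.range L, f τ + ∑ τ ∈ Finset.Ico L R, f τ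
        + ∑ τ ∈ Finset.Ico R T, f τ := hsplit
    _ ≤ C + 11 / 4 + C := by linarith
    _ ≤ 11 / 4 + 16 / π ^ 2 := hfinal
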